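/- In the coupon collector process with N coupons, conditionally on X_m = ℓ, the time-reversed process is a Markov chain whose transition probabilities from state (n,k) to (n-1,k-1) equal S2(n-1,k-1)/S2(n,k) and to (n-1,k) equal k·S2(n-1,k)/S2(n,k); in particular these do not depend on N. -/

import Mathlib

open Finset

/-- Stirling numbers of the second kind. -/
def S2 : ℕ → ℕ → ℕ
  | 0, 0 => 1
  | 0, _ + 1 => 0
  | _ + 1, 0 => 0
  | n + 1, k + 1 => S2 n k + (k + 1) * S2 n (k + 1)

/-- Number of distinct coupons collected after the first `n` of `m` uniform draws. -/
def coupons (N m : ℕ) (n : ℕ) (f : Fin m → Fin N) : ℕ :=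
  ((univ.filter fun i : Fin m => (i : ℕ) < n).image f).card

/-! ### Auxiliary lemmas -/

lemma S2_pos : ∀ n k : ℕ, (0 < k ∨ n = 0) → k ≤ n → 0 < S2 n k := by
  intro n
  induction n with
  | zero => intro k _ hk; interval_cases k; simp [S2]
  | succ n ih =>
    rintro (_ | k) h hkn
    · rcases h with h | h <;> omega
    · rw [S2]
      rcases Nat.lt_or_ge k n with hlt | hge
      · have := ih (k + 1) (Or.inl (Nat.succ_pos k)) hlt
        positivity
      · have hk : k = n := by omega
        subst hk
        have := ih k (by omega) le_rfl
        positivity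

lemma card_filter_prod {A B : Type*} [Fintype A] [Fintype B]
    (W : A × B → Prop) [DecidablePred W] :
    (univ.filter W).card = ∑ a : A, (univ.filter fun b => W (a, b)).card := by
  simp only [Finset.card_filter]
  rw [← Finset.univ_product_univ, Finset.sum_product]

lemma snoc_eta {β : Type*} {p : ℕ} (f : Fin (p + 1) → β) :
    (Fin.snoc (f ∘ Fin.castSucc) (f (Fin.last p)) : Fin (p + 1) → β) = f := by
  funext i
  induction i using Fin.lastCases with
  | last => simp
  | cast i => simp

lemma image_snoc {β : Type*} [DecidableEq β] (p : ℕ) (g : Fin p → β) (a : β) :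
    univ.image (Fin.snoc g a : Fin (p + 1) → β) = insert a (univ.image g) := by
  ext x
  simp only [Finset.mem_image, Finset.mem_insert, Finset.mem_univ, true_and]
  constructor
  · rintro ⟨i, rfl⟩
    induction i using Fin.lastCases with
    | last => left; simp
    | cast i => right; exact ⟨i, by simp⟩
  · rintro (rfl | ⟨i, rfl⟩)
    · exact ⟨Fin.last p, by simp⟩
    · exact ⟨Fin.castSucc i, by simp⟩

lemma card_insert_filter (N j : ℕ) (s : Finset (Fin N)) :
    (univ.filter fun a : Fin N => (insert a s).card = j).card
      = (if s.card = j then s.card else 0) + (if s.card + 1 = j then N - s.card else 0) := by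
  classical
  rw [Finset.card_filter, ← Finset.sum_filter_add_sum_filter_not univ (· ∈ s)]
  have h1 : ∀ a ∈ univ.filter (· ∈ s), (if (insert a s).card = j then 1 else 0)
      = if s.card = j then 1 else 0 := by
    intro a ha
    simp only [Finset.mem_filter] at ha
    rw [Finset.insert_eq_self.2 ha.2]
  have h2 : ∀ a ∈ univ.filter (¬ · ∈ s), (if (insert a s).card = j then 1 else 0)
      = if s.card + 1 = j then 1 else 0 := by
    intro a ha
    simp only [Finset.mem_filter] at ha
    rw [Finset.card_insert_of_notMem ha.2]
  rw [Finset.sum_congr rfl h1, Finset.sum_congr rfl h2, Finset.sum_const, Finset.sum_const]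
  have hs : univ.filter (· ∈ s) = s := by ext x; simp
  have hsc : (univ.filter (¬ · ∈ s)) = sᶜ := by ext x; simp
  rw [hs, hsc, Finset.card_compl]
  by_cases e1 : s.card = j <;> by_cases e2 : s.card + 1 = j <;> simp [e1, e2]

/-- The number of maps `Fin r → Fin N` whose image has exactly `j` elements. -/
lemma card_image_count (N : ℕ) : ∀ (r j : ℕ),
    (univ.filter fun g : Fin r → Fin N => (univ.image g).card = j).card
      = S2 r j * N.descFactorial j := by
  intro r
  induction r with
  | zero =>
    intro j
    match j with
    | 0 => simp [S2, Finset.univ_eq_empty]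
    | j + 1 => simp [S2, Finset.univ_eq_empty]
  | succ p ih =>
    intro j
    have key : (univ.filter fun g : Fin (p + 1) → Fin N => (univ.image g).card = j).card
        = (univ.filter fun z : (Fin p → Fin N) × Fin N =>
            (insert z.2 (univ.image z.1)).card = j).card := by
      rw [← Fintype.card_subtype, ← Fintype.card_subtype]
      refine Fintype.card_congr (Equiv.subtypeEquiv
        (⟨fun f => (f ∘ Fin.castSucc, f (Fin.last p)), fun z => Fin.snoc z.1 z.2,
          fun f => snoc_eta f, fun z => by ext <;> simp⟩ :
            (Fin (p + 1) → Fin N) ≃ (Fin p → Fin N) × Fin N) (fun f => ?_))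
      simp only [Equiv.coe_fn_mk]
      rw [← image_snoc p (f ∘ Fin.castSucc) (f (Fin.last p)), snoc_eta]
    rw [key, card_filter_prod]
    have inner : ∀ g : Fin p → Fin N,
        (univ.filter fun a : Fin N => (insert a (univ.image g)).card = j).card
          = (if (univ.image g).card = j then (univ.image g).card else 0)
            + (if (univ.image g).card + 1 = j then N - (univ.image g).card else 0) :=
      fun g => card_insert_filter N j (univ.image g)
    rw [Finset.sum_congr rfl fun g _ => inner g, Finset.sum_add_distrib]
    have sum1 : (∑ g : Fin p → Fin N,
        if (univ.image g).card = j then (univ.image g).card else 0)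
          = (S2 p j * N.descFactorial j) * j := by
      rw [← Finset.sum_filter]
      rw [Finset.sum_congr rfl (fun g hg => (Finset.mem_filter.1 hg).2), Finset.sum_const,
        ih j, smul_eq_mul]
    have sum2 : (∑ g : Fin p → Fin N,
        if (univ.image g).card + 1 = j then N - (univ.image g).card else 0)
          = if 1 ≤ j then (S2 p (j-1) * N.descFactorial (j-1)) * (N - (j-1)) else 0 := by
      match j with
      | 0 => simp
      | j + 1 =>
        simp only [Nat.add_sub_cancel, if_pos (Nat.le_add_left 1 j)]
        rw [← Finset.sum_filter]
        have : ∀ g ∈ (univ.filter fun g : Fin p → Fin N => (univ.image g).card + 1 = j + 1),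
            N - (univ.image g).card = N - j := by
          intro g hg
          have := (Finset.mem_filter.1 hg).2
          omega
        rw [Finset.sum_congr rfl this, Finset.sum_const,
          show (univ.filter fun g : Fin p → Fin N => (univ.image g).card + 1 = j + 1)
            = (univ.filter fun g : Fin p → Fin N => (univ.image g).card = j) from
            Finset.filter_congr (fun g _ => by omega),
          ih j, smul_eq_mul]
    rw [sum1, sum2]
    match j with
    | 0 => simp [S2]
    | j + 1 =>
      simp only [Nat.add_sub_cancel, if_pos (Nat.le_add_left 1 j)]
      rw [S2, Nat.descFactorial_succ]
      ring

lemma prefix_image {N p : ℕ} (g : Fin (p + 1) → Fin N) :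
    (univ.filter fun i : Fin (p + 1) => (i : ℕ) < p).image g
      = univ.image (g ∘ Fin.castSucc) := by
  ext x
  simp only [Finset.mem_image, Finset.mem_filter, Finset.mem_univ, true_and,
    Function.comp_apply]
  constructor
  · rintro ⟨i, hi, rfl⟩
    exact ⟨⟨(i : ℕ), hi⟩, rfl⟩
  · rintro ⟨i, rfl⟩
    exact ⟨Fin.castSucc i, by simp [i.2], rfl⟩

/-- Counting maps `Fin (p+1) → Fin N` by the image size of the first `p` values and of all
values. -/
lemma Gcount (N p j k : ℕ) :
    (univ.filter fun g : Fin (p + 1) → Fin N =>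
        (univ.image (g ∘ Fin.castSucc)).card = j ∧ (univ.image g).card = k).card
      = S2 p j * N.descFactorial j *
          ((if j = k then j else 0) + (if j + 1 = k then N - j else 0)) := by
  classical
  have key : (univ.filter fun g : Fin (p + 1) → Fin N =>
        (univ.image (g ∘ Fin.castSucc)).card = j ∧ (univ.image g).card = k).card
      = (univ.filter fun z : (Fin p → Fin N) × Fin N =>
          (univ.image z.1).card = j ∧ (insert z.2 (univ.image z.1)).card = k).card := by
    rw [← Fintype.card_subtype, ← Fintype.card_subtype]
    refine Fintype.card_congr (Equiv.subtypeEquiv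
      (⟨fun f => (f ∘ Fin.castSucc, f (Fin.last p)), fun z => Fin.snoc z.1 z.2,
        fun f => snoc_eta f, fun z => by ext <;> simp⟩ :
          (Fin (p + 1) → Fin N) ≃ (Fin p → Fin N) × Fin N) (fun f => ?_))
    simp only [Equiv.coe_fn_mk]
    constructor
    · rintro ⟨h1, h2⟩
      refine ⟨h1, ?_⟩
      rw [← image_snoc p (f ∘ Fin.castSucc) (f (Fin.last p)), snoc_eta]
      exact h2
    · rintro ⟨h1, h2⟩
      refine ⟨h1, ?_⟩
      rw [← image_snoc p (f ∘ Fin.castSucc) (f (Fin.last p)), snoc_eta] at h2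
      exact h2
  rw [key, card_filter_prod]
  have inner : ∀ g : Fin p → Fin N,
      (univ.filter fun a : Fin N =>
          (univ.image g).card = j ∧ (insert a (univ.image g)).card = k).card
        = if (univ.image g).card = j
            then ((if j = k then j else 0) + (if j + 1 = k then N - j else 0)) else 0 := by
    intro g
    by_cases hg : (univ.image g).card = j
    · rw [if_pos hg]
      have : (univ.filter fun a : Fin N =>
          (univ.image g).card = j ∧ (insert a (univ.image g)).card = k)
          = (univ.filter fun a : Fin N => (insert a (univ.image g)).card = k) := by
        apply Finset.filter_congr
        intro a _
        simp [hg]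
      rw [this, card_insert_filter, hg]
    · rw [if_neg hg]
      rw [Finset.card_eq_zero]
      apply Finset.filter_false_of_mem
      intro a _
      tauto
  rw [Finset.sum_congr rfl fun g _ => inner g, ← Finset.sum_filter, Finset.sum_const,
    card_image_count, smul_eq_mul]

section Split
variable {N m n : ℕ}

def tailMap (hnm : n ≤ m) (j : Fin (m - n)) : Fin m := ⟨n + j, by omega⟩

@[simp] lemma tailMap_val (hnm : n ≤ m) (j : Fin (m - n)) : (tailMap hnm j : ℕ) = n + j := rfl

def splitE (hnm : n ≤ m) : (Fin m → Fin N) ≃ (Fin n → Fin N) × (Fin (m - n) → Fin N) where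
  toFun f := (f ∘ Fin.castLE hnm, f ∘ tailMap hnm)
  invFun z := fun i => if h : (i : ℕ) < n then z.1 ⟨i, h⟩ else z.2 ⟨(i : ℕ) - n, by omega⟩
  left_inv f := by
    funext i
    by_cases h : (i : ℕ) < n
    · simp only [dif_pos h]; rfl
    · simp only [dif_neg h]
      exact congrArg f (Fin.ext (by simp; omega))
  right_inv z := by
    ext i
    · simp only [Function.comp_apply, Fin.coe_castLE, dif_pos i.2]
    · have h : ¬ ((tailMap hnm i : ℕ) < n) := by simp
      simp only [Function.comp_apply, dif_neg h]
      congr 1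
      ext
      simp

lemma coupons_head (hnm : n ≤ m) (r : ℕ) (hr : r ≤ n) (f : Fin m → Fin N) :
    coupons N m r f
      = ((univ.filter fun i : Fin n => (i : ℕ) < r).image (f ∘ Fin.castLE hnm)).card := by
  unfold coupons
  congr 1
  ext x
  simp only [Finset.mem_image, Finset.mem_filter, Finset.mem_univ, true_and,
    Function.comp_apply]
  constructor
  · rintro ⟨i, hi, rfl⟩
    exact ⟨⟨(i : ℕ), by omega⟩, hi, rfl⟩
  · rintro ⟨i, hi, rfl⟩
    exact ⟨Fin.castLE hnm i, hi, rfl⟩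

lemma coupons_all (hnm : n ≤ m) (f : Fin m → Fin N) :
    coupons N m m f
      = (univ.image (f ∘ Fin.castLE hnm) ∪ univ.image (f ∘ tailMap hnm)).card := by
  unfold coupons
  congr 1
  ext x
  simp only [Finset.mem_image, Finset.mem_filter, Finset.mem_univ, true_and,
    Finset.mem_union, Function.comp_apply]
  constructor
  · rintro ⟨i, _, rfl⟩
    by_cases h : (i : ℕ) < n
    · exact Or.inl ⟨⟨(i : ℕ), h⟩, rfl⟩
    · refine Or.inr ⟨⟨(i : ℕ) - n, by omega⟩, congrArg f (Fin.ext ?_)⟩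
      simp; omega
  · rintro (⟨i, rfl⟩ | ⟨j, rfl⟩)
    · exact ⟨Fin.castLE hnm i, i.2.trans_le hnm, rfl⟩
    · exact ⟨tailMap hnm j, (tailMap hnm j).2, rfl⟩

end Split

lemma exists_perm_image {α : Type*} [Fintype α] [DecidableEq α] {s t : Finset α}
    (h : s.card = t.card) : ∃ σ : Equiv.Perm α, s.image σ = t := by
  classical
  let e1 : {x // x ∈ s} ≃ {x // x ∈ t} := Fintype.equivOfCardEq (by
    simpa [Fintype.card_coe] using h)
  let e2 : {x // ¬ x ∈ s} ≃ {x // ¬ x ∈ t} := Fintype.equivOfCardEq (by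
    rw [Fintype.card_subtype_compl, Fintype.card_subtype_compl]
    simp [Fintype.card_coe, h])
  let σ : Equiv.Perm α :=
    (Equiv.sumCompl (· ∈ s)).symm.trans ((e1.sumCongr e2).trans (Equiv.sumCompl (· ∈ t)))
  refine ⟨σ, Finset.eq_of_subset_of_card_le ?_ ?_⟩
  · intro y hy
    simp only [Finset.mem_image] at hy
    obtain ⟨x, hx, rfl⟩ := hy
    have : σ x = (e1 ⟨x, hx⟩ : α) := by
      simp [σ, Equiv.sumCompl_symm_apply_of_pos hx]
    rw [this]
    exact (e1 ⟨x, hx⟩).2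
  · rw [Finset.card_image_of_injective _ σ.injective, h]

lemma tail_count_const {N r ℓ : ℕ} {s t : Finset (Fin N)} (hst : s.card = t.card) :
    (univ.filter fun h : Fin r → Fin N => (s ∪ univ.image h).card = ℓ).card
      = (univ.filter fun h : Fin r → Fin N => (t ∪ univ.image h).card = ℓ).card := by
  classical
  obtain ⟨σ, hσ⟩ := exists_perm_image hst
  rw [← Fintype.card_subtype, ← Fintype.card_subtype]
  refine Fintype.card_congr (Equiv.subtypeEquiv
    (Equiv.arrowCongr (Equiv.refl (Fin r)) σ) (fun h => ?_))
  have him : univ.image ((Equiv.arrowCongr (Equiv.refl (Fin r)) σ) h)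
      = (univ.image h).image σ := by
    rw [Finset.image_image]
    rfl
  rw [him, ← hσ, ← Finset.image_union,
    Finset.card_image_of_injective _ σ.injective]

/-- Master factorization: the number of `f` whose head satisfies `P` (which forces the head
image to have `k` elements) and whose total image has `ℓ` elements factors as
(number of heads satisfying `P`) × (number of tails completing a fixed `k`-set to `ℓ`). -/
lemma master {N m n k ℓ : ℕ} (hnm : n ≤ m) (s₀ : Finset (Fin N)) (hs₀ : s₀.card = k)
    (P : (Fin n → Fin N) → Prop) [DecidablePred P]
    (hP : ∀ g, P g → (univ.image g).card = k) :
    (univ.filter fun f : Fin m → Fin N =>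
        P (f ∘ Fin.castLE hnm) ∧
          (univ.image (f ∘ Fin.castLE hnm) ∪ univ.image (f ∘ tailMap hnm)).card = ℓ).card
      = (univ.filter P).card *
        (univ.filter fun h : Fin (m - n) → Fin N => (s₀ ∪ univ.image h).card = ℓ).card := by
  classical
  have key : (univ.filter fun f : Fin m → Fin N =>
      P (f ∘ Fin.castLE hnm) ∧
        (univ.image (f ∘ Fin.castLE hnm) ∪ univ.image (f ∘ tailMap hnm)).card = ℓ).card
      = (univ.filter fun z : (Fin n → Fin N) × (Fin (m - n) → Fin N) =>
          P z.1 ∧ (univ.image z.1 ∪ univ.image z.2).card = ℓ).card := by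
    rw [← Fintype.card_subtype, ← Fintype.card_subtype]
    exact Fintype.card_congr (Equiv.subtypeEquiv (splitE hnm) (fun f => Iff.rfl))
  rw [key]
  have cfp : (univ.filter fun z : (Fin n → Fin N) × (Fin (m - n) → Fin N) =>
      P z.1 ∧ (univ.image z.1 ∪ univ.image z.2).card = ℓ).card
      = ∑ g : Fin n → Fin N,
        (univ.filter fun h : Fin (m - n) → Fin N =>
          P g ∧ (univ.image g ∪ univ.image h).card = ℓ).card := by
    simp only [Finset.card_filter]
    rw [← Finset.univ_product_univ, Finset.sum_product]
  rw [cfp]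
  have inner : ∀ g : Fin n → Fin N,
      (univ.filter fun h : Fin (m - n) → Fin N =>
        P g ∧ (univ.image g ∪ univ.image h).card = ℓ).card
      = if P g then
          (univ.filter fun h : Fin (m - n) → Fin N => (s₀ ∪ univ.image h).card = ℓ).card
        else 0 := by
    intro g
    by_cases hg : P g
    · rw [if_pos hg]
      have : (univ.filter fun h : Fin (m - n) → Fin N =>
          P g ∧ (univ.image g ∪ univ.image h).card = ℓ)
          = (univ.filter fun h : Fin (m - n) → Fin N =>
            (univ.image g ∪ univ.image h).card = ℓ) :=
        Finset.filter_congr (fun h _ => by simp [hg])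
      rw [this]
      exact tail_count_const ((hP g hg).trans hs₀.symm)
    · rw [if_neg hg, Finset.card_eq_zero]
      apply Finset.filter_false_of_mem
      intro h _
      tauto
  rw [Finset.sum_congr rfl fun g _ => inner g, ← Finset.sum_filter, Finset.sum_const,
    smul_eq_mul]

lemma card_lt_filter {N c : ℕ} (h : c ≤ N) :
    (univ.filter fun x : Fin N => (x : ℕ) < c).card = c := by
  have e : (univ.filter fun x : Fin N => (x : ℕ) < c) = univ.image (Fin.castLE h) := by
    ext x
    simp only [Finset.mem_filter, Finset.mem_univ, true_and, Finset.mem_image]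
    constructor
    · intro hx
      exact ⟨⟨(x : ℕ), hx⟩, rfl⟩
    · rintro ⟨i, rfl⟩
      exact i.2
  rw [e, Finset.card_image_of_injective _ (Fin.castLE_injective h), Finset.card_univ,
    Fintype.card_fin]

lemma T_pos {N r k ℓ : ℕ} (hk : 0 < k) (hkℓ : k ≤ ℓ) (hℓN : ℓ ≤ N) (hadm : ℓ - k ≤ r) :
    0 < (univ.filter fun h : Fin r → Fin N =>
      ((univ.filter fun x : Fin N => (x : ℕ) < k) ∪ univ.image h).card = ℓ).card := by
  rw [Finset.card_pos]
  refine ⟨fun j => if hj : k + (j : ℕ) < ℓ then ⟨k + j, by omega⟩ else ⟨0, by omega⟩, ?_⟩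
  simp only [Finset.mem_filter, Finset.mem_univ, true_and]
  have e : ((univ.filter fun x : Fin N => (x : ℕ) < k) ∪
      univ.image fun j : Fin r => if hj : k + (j : ℕ) < ℓ then
        (⟨k + j, by omega⟩ : Fin N) else ⟨0, by omega⟩)
      = univ.filter fun x : Fin N => (x : ℕ) < ℓ := by
    ext x
    simp only [Finset.mem_union, Finset.mem_filter, Finset.mem_univ, true_and,
      Finset.mem_image]
    constructor
    · rintro (hx | ⟨j, rfl⟩)
      · omega
      · split_ifs with hj
        · simpa using hj
        · simpa using by omega
    · intro hx
      by_cases hxk : (x : ℕ) < k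
      · exact Or.inl hxk
      · refine Or.inr ⟨⟨(x : ℕ) - k, by omega⟩, ?_⟩
        have hj : k + ((x : ℕ) - k) < ℓ := by omega
        rw [dif_pos hj]
        ext
        simp
        omega
  rw [e, card_lt_filter hℓN]

/-- Under the uniform measure on functions `Fin m → Fin N`, conditionally on `X_m = ℓ`,
the time-reversed coupon-collector chain has the transition probabilities given by the
Pascal formula for Stirling numbers of the second kind; in particular they do not
depend on `N`. (Conditional probabilities are expressed as ratios of cardinalities.) -/
theorem coupon_reversed_transitions (N m ℓ n k : ℕ) (hk : 0 < k) (hkn : k < n) (hnm : n ≤ m)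
    (hkℓ : k ≤ ℓ) (hℓN : ℓ ≤ N) (hadm : ℓ - k ≤ m - n) :
    ((univ.filter fun f : Fin m → Fin N =>
          coupons N m (n - 1) f = k - 1 ∧ coupons N m n f = k ∧ coupons N m m f = ℓ).card : ℝ) /
        ((univ.filter fun f : Fin m → Fin N =>
          coupons N m n f = k ∧ coupons N m m f = ℓ).card)
      = (S2 (n - 1) (k - 1) : ℝ) / (S2 n k) ∧
    ((univ.filter fun f : Fin m → Fin N =>
          coupons N m (n - 1) f = k ∧ coupons N m n f = k ∧ coupons N m m f = ℓ).card : ℝ) /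
        ((univ.filter fun f : Fin m → Fin N =>
          coupons N m n f = k ∧ coupons N m m f = ℓ).card)
      = (k : ℝ) * (S2 (n - 1) k) / (S2 n k) := by
  classical
  obtain ⟨p, rfl⟩ : ∃ p, n = p + 1 := ⟨n - 1, by omega⟩
  obtain ⟨k', rfl⟩ : ∃ k', k = k' + 1 := ⟨k - 1, by omega⟩
  simp only [Nat.add_sub_cancel]
  set s₀ : Finset (Fin N) := univ.filter fun x : Fin N => (x : ℕ) < k' + 1 with hs₀def
  have hs₀ : s₀.card = k' + 1 := card_lt_filter (hkℓ.trans hℓN)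
  set T : ℕ := (univ.filter fun h : Fin (m - (p + 1)) → Fin N =>
    (s₀ ∪ univ.image h).card = ℓ).card with hTdef
  have hT : 0 < T := T_pos hk hkℓ hℓN hadm
  have hfull : (univ.filter fun i : Fin (p + 1) => (i : ℕ) < p + 1) = univ := by
    ext i; simp [i.2]; exact Nat.le_of_lt_succ i.2
  -- Denominator
  have hden : (univ.filter fun f : Fin m → Fin N =>
      coupons N m (p + 1) f = k' + 1 ∧ coupons N m m f = ℓ).card
      = S2 (p + 1) (k' + 1) * N.descFactorial (k' + 1) * T := by
    have e1 : (univ.filter fun f : Fin m → Fin N =>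
        coupons N m (p + 1) f = k' + 1 ∧ coupons N m m f = ℓ)
        = univ.filter fun f : Fin m → Fin N =>
            ((univ.image (f ∘ Fin.castLE hnm)).card = k' + 1) ∧
            (univ.image (f ∘ Fin.castLE hnm) ∪ univ.image (f ∘ tailMap hnm)).card = ℓ := by
      apply Finset.filter_congr
      intro f _
      rw [coupons_head hnm (p + 1) le_rfl f, coupons_all hnm f, hfull]
    rw [e1, master hnm s₀ hs₀ (fun g => (univ.image g).card = k' + 1) (fun g hg => hg),
      card_image_count]
  -- First numerator
  have hnum1 : (univ.filter fun f : Fin m → Fin N =>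
      coupons N m p f = k' ∧ coupons N m (p + 1) f = k' + 1 ∧ coupons N m m f = ℓ).card
      = S2 p k' * N.descFactorial (k' + 1) * T := by
    have e1 : (univ.filter fun f : Fin m → Fin N =>
        coupons N m p f = k' ∧ coupons N m (p + 1) f = k' + 1 ∧ coupons N m m f = ℓ)
        = univ.filter fun f : Fin m → Fin N =>
            ((univ.image ((f ∘ Fin.castLE hnm) ∘ Fin.castSucc)).card = k' ∧
              (univ.image (f ∘ Fin.castLE hnm)).card = k' + 1) ∧
            (univ.image (f ∘ Fin.castLE hnm) ∪ univ.image (f ∘ tailMap hnm)).card = ℓ := by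
      apply Finset.filter_congr
      intro f _
      rw [coupons_head hnm p (by omega) f, coupons_head hnm (p + 1) le_rfl f,
        coupons_all hnm f, hfull, prefix_image]
      tauto
    rw [e1, master hnm s₀ hs₀
      (fun g => (univ.image (g ∘ Fin.castSucc)).card = k' ∧ (univ.image g).card = k' + 1)
      (fun g hg => hg.2), Gcount]
    have h1 : (if k' = k' + 1 then k' else 0) = 0 := by simp
    have h2 : (if k' + 1 = k' + 1 then N - k' else 0) = N - k' := by simp
    rw [h1, h2, Nat.descFactorial_succ]
    ring
  -- Second numerator
  have hnum2 : (univ.filter fun f : Fin m → Fin N =>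
      coupons N m p f = k' + 1 ∧ coupons N m (p + 1) f = k' + 1 ∧ coupons N m m f = ℓ).card
      = (k' + 1) * S2 p (k' + 1) * N.descFactorial (k' + 1) * T := by
    have e1 : (univ.filter fun f : Fin m → Fin N =>
        coupons N m p f = k' + 1 ∧ coupons N m (p + 1) f = k' + 1 ∧ coupons N m m f = ℓ)
        = univ.filter fun f : Fin m → Fin N =>
            ((univ.image ((f ∘ Fin.castLE hnm) ∘ Fin.castSucc)).card = k' + 1 ∧
              (univ.image (f ∘ Fin.castLE hnm)).card = k' + 1) ∧
            (univ.image (f ∘ Fin.castLE hnm) ∪ univ.image (f ∘ tailMap hnm)).card = ℓ := by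
      apply Finset.filter_congr
      intro f _
      rw [coupons_head hnm p (by omega) f, coupons_head hnm (p + 1) le_rfl f,
        coupons_all hnm f, hfull, prefix_image]
      tauto
    rw [e1, master hnm s₀ hs₀
      (fun g => (univ.image (g ∘ Fin.castSucc)).card = k' + 1 ∧ (univ.image g).card = k' + 1)
      (fun g hg => hg.2), Gcount]
    have h1 : (if k' + 1 = k' + 1 then k' + 1 else 0) = k' + 1 := by simp
    have h2 : (if k' + 1 + 1 = k' + 1 then N - (k' + 1) else 0) = 0 := by simp
    rw [h1, h2]
    ring
  -- Nonvanishing facts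
  have hS2 : (S2 (p + 1) (k' + 1) : ℝ) ≠ 0 := by
    have := S2_pos (p + 1) (k' + 1) (Or.inl (Nat.succ_pos k')) (by omega)
    positivity
  have hdF : (N.descFactorial (k' + 1) : ℝ) ≠ 0 := by
    have : N.descFactorial (k' + 1) ≠ 0 := by
      intro h
      have := Nat.descFactorial_eq_zero_iff_lt.1 h
      omega
    exact_mod_cast this
  have hTne : (T : ℝ) ≠ 0 := by positivity
  constructor
  · rw [hnum1, hden]
    push_cast
    rw [mul_div_mul_right _ _ hTne, mul_div_mul_right _ _ hdF]
  · rw [hnum2, hden]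
    push_cast
    rw [mul_div_mul_right _ _ hTne, mul_div_mul_right _ _ hdF]
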